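/- Let (Y,d) be a metric space, X ⊆ Y a nonempty subset, and δ a metric on X such that (X,δ) is a complete metric space. Let F be a multivalued mapping from X to Y such that the function x ↦ d(x,F(x)) is lower semicontinuous on (X,δ), and such that for each x ∈ X with x ∉ F(x) there exists z ∈ X with z ≠ x and δ(x,z) ≤ d(x,F(x)) − d(z,F(z)). Then F has a fixed point. -/

import Mathlib

open Metric Filter Topology

/-- Auxiliary Caristi-type lemma: on a nonempty complete metric space, a nonnegative
lower semicontinuous `f` cannot admit, at every point `x`, some `z ≠ x` with
`dist x z ≤ f x - f z`. -/
lemma caristi_aux_no_improvement {α : Type*} [MetricSpace α] [CompleteSpace α] [Nonempty α]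
    (f : α → ℝ) (hf0 : ∀ x, 0 ≤ f x) (hlsc : LowerSemicontinuous f)
    (hcond : ∀ x, ∃ z, z ≠ x ∧ dist x z ≤ f x - f z) : False := by
  set S : α → Set α := fun x => {z | dist x z ≤ f x - f z} with hS
  have hxS : ∀ x, x ∈ S x := by intro x; simp [hS]
  have hbdd : ∀ x : α, BddBelow (f '' S x) := by
    intro x
    exact ⟨0, by rintro v ⟨z, _, rfl⟩; exact hf0 z⟩
  have key : ∀ p : α × ℕ, ∃ y, y ∈ S p.1 ∧ f y < sInf (f '' S p.1) + (1/2)^p.2 := by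
    rintro ⟨x, n⟩
    have hlt : sInf (f '' S x) < sInf (f '' S x) + (1/2)^n := by
      have : (0:ℝ) < (1/2)^n := by positivity
      linarith
    obtain ⟨v, ⟨y, hy, rfl⟩, hv⟩ :=
      exists_lt_of_csInf_lt (s := f '' S x) ⟨f x, ⟨x, hxS x, rfl⟩⟩ hlt
    exact ⟨y, hy, hv⟩
  choose g hg1 hg2 using key
  obtain ⟨x0⟩ := ‹Nonempty α›
  let u : ℕ → α := fun n => Nat.rec x0 (fun n xn => g (xn, n)) n
  have husucc : ∀ n, u (n+1) = g (u n, n) := fun n => rfl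
  have hmem : ∀ n, u (n+1) ∈ S (u n) := fun n => hg1 (u n, n)
  have hstep : ∀ n, dist (u n) (u (n+1)) ≤ f (u n) - f (u (n+1)) := fun n => hmem n
  have hchain : ∀ n m, dist (u n) (u (n+m)) ≤ f (u n) - f (u (n+m)) := by
    intro n m
    induction m with
    | zero => simp
    | succ m ih =>
      calc dist (u n) (u (n+(m+1))) ≤ dist (u n) (u (n+m)) + dist (u (n+m)) (u (n+m+1)) :=
            dist_triangle _ _ _
        _ ≤ (f (u n) - f (u (n+m))) + (f (u (n+m)) - f (u (n+m+1))) :=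
            add_le_add ih (hstep (n+m))
        _ = f (u n) - f (u (n+(m+1))) := by ring_nf
  have hchain' : ∀ n m, n ≤ m → dist (u n) (u m) ≤ f (u n) - f (u m) := by
    intro n m hnm
    obtain ⟨k, rfl⟩ := Nat.exists_eq_add_of_le hnm
    exact hchain n k
  have hsum : Summable (fun n => dist (u n) (u (n+1))) := by
    apply summable_of_sum_range_le (fun n => dist_nonneg) (c := f (u 0))
    intro n
    calc ∑ i ∈ Finset.range n, dist (u i) (u (i+1))
        ≤ ∑ i ∈ Finset.range n, (f (u i) - f (u (i+1))) :=
          Finset.sum_le_sum (fun i _ => hstep i)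
      _ = f (u 0) - f (u n) := by rw [Finset.sum_range_sub' (fun i => f (u i))]
      _ ≤ f (u 0) := by linarith [hf0 (u n)]
  obtain ⟨x, hx⟩ := cauchySeq_tendsto_of_complete (cauchySeq_of_summable_dist hsum)
  have hanti : Antitone (fun n => f (u n)) := by
    apply antitone_nat_of_succ_le
    intro n
    have h1 := hstep n
    have h2 := dist_nonneg (x := u n) (y := u (n+1))
    linarith
  have hLbdd : BddBelow (Set.range fun n => f (u n)) := ⟨0, by rintro v ⟨n, rfl⟩; exact hf0 _⟩
  set L : ℝ := ⨅ n, f (u n) with hLdef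
  have hL : Tendsto (fun n => f (u n)) atTop (𝓝 L) := tendsto_atTop_ciInf hanti hLbdd
  have hfxL : f x ≤ L := by
    by_contra hcon
    push_neg at hcon
    obtain ⟨y, hy1, hy2⟩ := exists_between hcon
    have hev1 : ∀ᶠ n in atTop, y < f (u n) := hx.eventually (hlsc x y hy2)
    have hev2 : ∀ᶠ n in atTop, f (u n) < y := hL.eventually_lt_const hy1
    obtain ⟨n, h1, h2⟩ := (hev1.and hev2).exists
    linarith
  have hdistx : ∀ n, dist (u n) x ≤ f (u n) - f x := by
    intro n
    have htend : Tendsto (fun m => dist (u n) (u m)) atTop (𝓝 (dist (u n) x)) :=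
      ((continuous_const.dist continuous_id).continuousAt.tendsto).comp hx
    refine le_of_tendsto htend ?_
    filter_upwards [eventually_ge_atTop n] with m hm
    have h1 := hchain' n m hm
    have h2 : L ≤ f (u m) := ciInf_le hLbdd m
    linarith
  obtain ⟨z, hzne, hz⟩ := hcond x
  have hzS : ∀ n, z ∈ S (u n) := by
    intro n
    show dist (u n) z ≤ f (u n) - f z
    calc dist (u n) z ≤ dist (u n) x + dist x z := dist_triangle _ _ _
      _ ≤ (f (u n) - f x) + (f x - f z) := add_le_add (hdistx n) hz
      _ = f (u n) - f z := by ring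
  have hsmall : ∀ n, dist x z ≤ (1/2 : ℝ)^n := by
    intro n
    have h1 : f (u (n+1)) < sInf (f '' S (u n)) + (1/2)^n := by
      rw [husucc n]; exact hg2 (u n, n)
    have h2 : sInf (f '' S (u n)) ≤ f z := csInf_le (hbdd _) ⟨z, hzS n, rfl⟩
    have h3 : L ≤ f (u (n+1)) := ciInf_le hLbdd (n+1)
    linarith
  have hdist0 : dist x z ≤ 0 := by
    have htend : Tendsto (fun n => ((1:ℝ)/2)^n) atTop (𝓝 0) := by
      apply tendsto_pow_atTop_nhds_zero_of_lt_one <;> norm_num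
    exact ge_of_tendsto htend (Eventually.of_forall hsmall)
  exact hzne (dist_le_zero.mp hdist0).symm

/-- **Theorem 3.3.** Let `(Y,d)` be a metric space, `X ⊆ Y` a nonempty subset, and `δ` a
metric on `X` making `(X,δ)` a complete metric space. If `F` is a multivalued mapping
from `X` to `Y` (nonempty values) such that `x ↦ d(x,F(x))` is lower semicontinuous on
`(X,δ)` and for each `x ∈ X` with `x ∉ F(x)` there exists `z ∈ X`, `z ≠ x`, with
`δ(x,z) ≤ d(x,F(x)) − d(z,F(z))`, then `F` has a fixed point. -/
theorem fixed_point_of_infDist_tool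
    {Y : Type*} [MetricSpace Y] (X : Set Y) (hX : X.Nonempty)
    (mδ : MetricSpace X)
    (hcomplete : @CompleteSpace X mδ.toUniformSpace)
    (F : X → Set Y) (hFne : ∀ x, (F x).Nonempty)
    (hlsc : @LowerSemicontinuous X _ mδ.toUniformSpace.toTopologicalSpace _
      (fun x : X => infDist (x : Y) (F x)))
    (hcond : ∀ x : X, (x : Y) ∉ F x → ∃ z : X, z ≠ x ∧
      mδ.dist x z ≤ infDist (x : Y) (F x) - infDist (z : Y) (F z)) :
    ∃ x : X, (x : Y) ∈ F x := by
  by_contra hfix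
  push_neg at hfix
  obtain ⟨x0, hx0⟩ := hX
  exact @caristi_aux_no_improvement X mδ hcomplete ⟨⟨x0, hx0⟩⟩
    (fun x => infDist (x : Y) (F x)) (fun x => infDist_nonneg) hlsc
    (fun x => hcond x (hfix x))
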